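/- Let Q = Z_{q_1} × ⋯ × Z_{q_n} with q_1 ≤ q_2 ≤ ⋯ ≤ q_n, not all q_i equal. If Σ_{i=1}^{n−1}(q_i − 1) − (q_n − 1)(k − 1) is nonnegative and divisible by k, then there exists a mixed Steiner system MS(1, k, Q). -/

import Mathlib

open Finset

private lemma aux_mod (b r s : ℕ) (hb : 0 < b) (hr : r < b) :
    (s + (b + r - s % b) % b) % b = r := by
  have h1 : s % b < b := Nat.mod_lt _ hb
  have h4 : (s + (b + r - s % b) % b) % b = (s + (b + r - s % b)) % b :=
    Nat.ModEq.add_left s (Nat.mod_modEq _ _)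
  have h3 : s + (b + r - s % b) = b * (s / b) + (b + r) := by
    have := Nat.div_add_mod s b; omega
  rw [h4, h3, Nat.mul_add_mod, Nat.add_mod_left, Nat.mod_eq_of_lt hr]

private lemma aux_uniq (b r s p : ℕ) (hb : 0 < b) (hr : r < b) (h1 : s ≤ p)
    (h2 : p < s + b) (h3 : p % b = r) : p = s + (b + r - s % b) % b := by
  set a := (b + r - s % b) % b with ha
  have ha1 : a < b := Nat.mod_lt _ hb
  have ha2 : (s + a) % b = r := aux_mod b r s hb hr
  have hme : p ≡ s + a [MOD b] := h3.trans ha2.symm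
  rcases le_total p (s + a) with h | h
  · have hd : b ∣ s + a - p := (Nat.modEq_iff_dvd' h).mp hme
    have : s + a - p = 0 := by
      rcases Nat.eq_zero_or_pos (s + a - p) with h' | h'
      · exact h'
      · exact absurd (Nat.le_of_dvd h' hd) (by omega)
    omega
  · have hd : b ∣ p - (s + a) := (Nat.modEq_iff_dvd' h).mp hme.symm
    have : p - (s + a) = 0 := by
      rcases Nat.eq_zero_or_pos (p - (s + a)) with h' | h'
      · exact h'
      · exact absurd (Nat.le_of_dvd h' hd) (by omega)
    omega

private lemma aux_count_Ico (b r s L : ℕ) (hb : 0 < b) (hr : r < b) (hL : L ≤ b) :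
    ((Finset.Ico s (s + L)).filter (fun p => p % b = r)).card =
      if (b + r - s % b) % b < L then 1 else 0 := by
  set a := (b + r - s % b) % b with ha
  split_ifs with h
  · have : (Finset.Ico s (s + L)).filter (fun p => p % b = r) = {s + a} := by
      ext p
      simp only [mem_filter, mem_Ico, mem_singleton]
      constructor
      · rintro ⟨⟨hp1, hp2⟩, hp3⟩
        exact aux_uniq b r s p hb hr hp1 (by omega) hp3
      · rintro rfl
        exact ⟨⟨by omega, by omega⟩, aux_mod b r s hb hr⟩
    rw [this, card_singleton]
  · have : (Finset.Ico s (s + L)).filter (fun p => p % b = r) = ∅ := by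
      ext p
      simp only [mem_filter, mem_Ico, notMem_empty, iff_false, not_and]
      rintro ⟨hp1, hp2⟩ hp3
      have := aux_uniq b r s p hb hr hp1 (by omega) hp3
      omega
    rw [this, card_empty]

private lemma aux_tele (Off : ℕ → ℕ) (h : ∀ j, Off j ≤ Off (j + 1)) (g : ℕ → ℕ) (m : ℕ) :
    ∑ j ∈ range m, ∑ p ∈ Ico (Off j) (Off (j + 1)), g p = ∑ p ∈ Ico (Off 0) (Off m), g p := by
  have hm : Monotone Off := monotone_nat_of_le_succ h
  induction m with
  | zero => simp
  | succ m ih =>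
    rw [sum_range_succ, ih, Finset.sum_Ico_consecutive]
    · exact hm (Nat.zero_le m)
    · exact h m

private lemma aux_count_range (b k r : ℕ) (hb : 0 < b) (hr : r < b) :
    ((range (b * k)).filter (fun p => p % b = r)).card = k := by
  induction k with
  | zero => simp
  | succ k ih =>
    have hsplit : range (b * (k + 1)) = range (b * k) ∪ Ico (b * k) (b * k + b) := by
      rw [range_eq_Ico, range_eq_Ico, Nat.mul_succ, Finset.Ico_union_Ico_eq_Ico (Nat.zero_le _)
        (Nat.le_add_right _ _)]
    have hdisj : Disjoint ((range (b * k)).filter (fun p => p % b = r))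
        ((Ico (b * k) (b * k + b)).filter (fun p => p % b = r)) := by
      apply Finset.disjoint_filter_filter
      rw [range_eq_Ico]
      exact Finset.Ico_disjoint_Ico_consecutive 0 (b * k) (b * k + b)
    rw [hsplit, filter_union, card_union_of_disjoint hdisj, ih,
      aux_count_Ico b r (b * k) b hb hr le_rfl]
    have : (b * k) % b = 0 := Nat.mul_mod_right b k
    rw [this]
    simp only [Nat.sub_zero, Nat.add_mod_left, Nat.mod_eq_of_lt hr]
    rw [if_pos hr]

/-- Let `Q = Z_{q₁} × ⋯ × Z_{q_{n+1}}` with `q₁ ≤ ⋯ ≤ q_{n+1}`, not all equal. If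
`Σ_{i<n} (qᵢ - 1) - (q_{n+1} - 1)(k - 1)` is nonnegative and divisible by `k`, then there
exists a mixed Steiner system `MS(1, k, Q)`: a set of weight-`k` words over `Q` such that
every weight-1 word is within Hamming distance `k - 1` of exactly one codeword. -/
theorem stmt7 (n k : ℕ) (hk : 1 ≤ k) (q : Fin (n + 1) → ℕ) (hq : ∀ i, 2 ≤ q i)
    (hmono : Monotone q) (hne : ∃ i j, q i ≠ q j)
    (h₁ : (q (Fin.last n) - 1) * (k - 1) ≤ ∑ i : Fin n, (q i.castSucc - 1))
    (h₂ : k ∣ (∑ i : Fin n, (q i.castSucc - 1)) - (q (Fin.last n) - 1) * (k - 1)) :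
    ∃ C : Finset (∀ i, ZMod (q i)),
      (∀ c ∈ C, hammingNorm c = k) ∧
      ∀ x : ∀ i, ZMod (q i), hammingNorm x = 1 →
        ∃! c, c ∈ C ∧ hammingDist x c = k - 1 := by
  haveI inst : ∀ i, NeZero (q i) := fun i => ⟨by have := hq i; omega⟩
  set d : ℕ → ℕ := fun j => if h : j < n + 1 then q ⟨j, h⟩ - 1 else 0 with hd
  set Off : ℕ → ℕ := fun m => ∑ t ∈ Finset.range m, d t with hOffdef
  have hdq : ∀ i : Fin (n + 1), d i.val = q i - 1 := by
    intro i
    simp only [hd]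
    rw [dif_pos i.isLt, Fin.eta]
  have hOffs : ∀ j, Off (j + 1) = Off j + d j := fun j => Finset.sum_range_succ d j
  set N := Off (n + 1) with hNdef
  have hdn : d n = q (Fin.last n) - 1 := hdq (Fin.last n)
  have hNsum : N = (∑ i : Fin n, (q i.castSucc - 1)) + (q (Fin.last n) - 1) := by
    rw [hNdef, hOffs n, ← hdn]
    congr 1
    show (∑ t ∈ Finset.range n, d t) = ∑ i : Fin n, (q i.castSucc - 1)
    rw [← Fin.sum_univ_eq_sum_range (fun j => d j) n]
    refine Finset.sum_congr rfl fun i _ => ?_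
    have hlt : (i : ℕ) < n + 1 := i.isLt.trans (Nat.lt_succ_self n)
    simp only [hd]
    rw [dif_pos hlt]
    congr 1
  have e1 : (q (Fin.last n) - 1) * (k - 1) + (q (Fin.last n) - 1) = (q (Fin.last n) - 1) * k := by
    cases k with
    | zero => omega
    | succ k => rw [Nat.succ_sub_one, Nat.mul_succ]
  have hNk : k ∣ N := by
    obtain ⟨m, hm⟩ := h₂
    have hS : (∑ i : Fin n, (q i.castSucc - 1)) = k * m + (q (Fin.last n) - 1) * (k - 1) :=
      (Nat.sub_eq_iff_eq_add h₁).mp hm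
    refine ⟨m + (q (Fin.last n) - 1), ?_⟩
    rw [hNsum, hS, Nat.mul_add, mul_comm k (q (Fin.last n) - 1), ← e1]
    omega
  have hN0 : 0 < N := by
    have h5 : d n ≤ N := by rw [hNdef, hOffs n]; omega
    have h6 : 1 ≤ d n := by rw [hdn]; have := hq (Fin.last n); omega
    omega
  obtain ⟨b, hb⟩ := hNk
  have hb0 : 0 < b := by
    rcases Nat.eq_zero_or_pos b with h | h
    · rw [h, Nat.mul_zero] at hb; omega
    · exact h
  have hqLb : q (Fin.last n) - 1 ≤ b := by
    have h5 : (q (Fin.last n) - 1) * k ≤ N := by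
      rw [hNsum, ← e1]
      exact Nat.add_le_add_right h₁ _
    rw [hb, mul_comm k b] at h5
    exact Nat.le_of_mul_le_mul_right h5 (by omega)
  have hqb : ∀ i : Fin (n + 1), q i - 1 ≤ b := by
    intro i
    have := hmono (Fin.le_last i)
    omega
  have hdb : ∀ j, d j ≤ b := by
    intro j
    simp only [hd]
    split
    · exact hqb _
    · omega
  set A : Fin b → Fin (n + 1) → ℕ := fun r i => (b + r.val - Off i.val % b) % b with hA
  set c : Fin b → ∀ i, ZMod (q i) :=
    fun r i => if A r i < q i - 1 then ((A r i + 1 : ℕ) : ZMod (q i)) else 0 with hc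
  have hciff : ∀ (r : Fin b) (i : Fin (n + 1)) (α : ZMod (q i)), α ≠ 0 →
      (c r i = α ↔ (r : ℕ) = (Off i.val + (α.val - 1)) % b) := by
    intro r i α hα
    have hv1 : α.val ≠ 0 := fun h => hα ((ZMod.val_eq_zero α).mp h)
    have hv2 : α.val < q i := ZMod.val_lt α
    have hqi := hq i
    have hAm : (Off i.val + A r i) % b = r.val := aux_mod b r.val (Off i.val) hb0 r.isLt
    have hAlt : A r i < b := Nat.mod_lt _ hb0
    have ha0b : α.val - 1 < b := lt_of_lt_of_le (by omega) (hqb i)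
    have key : c r i = α ↔ A r i = α.val - 1 := by
      simp only [hc]
      split_ifs with h
      · constructor
        · intro he
          have hv := congrArg ZMod.val he
          rw [ZMod.val_cast_of_lt (by omega : A r i + 1 < q i)] at hv
          omega
        · intro he
          have h7 : A r i + 1 = α.val := by omega
          rw [h7, ZMod.natCast_zmod_val]
      · constructor
        · intro he; exact absurd he.symm hα
        · intro he; omega
    rw [key]
    constructor
    · intro he
      rw [← he, hAm]
    · intro he
      have hu : Off i.val + (α.val - 1) = Off i.val + A r i := by
        refine aux_uniq b r.val (Off i.val) _ hb0 r.isLt (Nat.le_add_right _ _) (by omega) he.symm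
      omega
  have hnorm : ∀ r : Fin b, hammingNorm (c r) = k := by
    intro r
    have h1 : hammingNorm (c r)
        = (Finset.univ.filter fun i : Fin (n + 1) => A r i < q i - 1).card := by
      show (Finset.univ.filter fun i : Fin (n + 1) => c r i ≠ 0).card = _
      congr 1
      apply Finset.filter_congr
      intro i _
      simp only [hc]
      split_ifs with h
      · simp only [h, iff_true]
        intro h0
        have hv := congrArg ZMod.val h0
        rw [ZMod.val_cast_of_lt (by have := hq i; omega : A r i + 1 < q i)] at hv
        simp [ZMod.val_zero] at hv
      · simp [h]
    rw [h1, Finset.card_filter]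
    have h2 : (∑ i : Fin (n + 1), if A r i < q i - 1 then 1 else 0)
        = ∑ j ∈ Finset.range (n + 1),
            (if (b + r.val - Off j % b) % b < d j then 1 else 0) := by
      rw [← Fin.sum_univ_eq_sum_range
        (fun j => if (b + r.val - Off j % b) % b < d j then 1 else 0) (n + 1)]
      refine Finset.sum_congr rfl fun i _ => ?_
      rw [hdq i]
    rw [h2]
    calc ∑ j ∈ Finset.range (n + 1), (if (b + r.val - Off j % b) % b < d j then 1 else 0)
        = ∑ j ∈ Finset.range (n + 1),
            ∑ p ∈ Finset.Ico (Off j) (Off (j + 1)), (if p % b = r.val then 1 else 0) := by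
          refine Finset.sum_congr rfl fun j _ => ?_
          rw [hOffs j, ← Finset.card_filter,
            aux_count_Ico b r.val (Off j) (d j) hb0 r.isLt (hdb j)]
      _ = ∑ p ∈ Finset.Ico (Off 0) (Off (n + 1)), (if p % b = r.val then 1 else 0) :=
          aux_tele Off (fun j => by rw [hOffs j]; omega) _ (n + 1)
      _ = ((Finset.range (b * k)).filter (fun p => p % b = r.val)).card := by
          rw [← Finset.card_filter]
          congr 1
          have h0 : Off 0 = 0 := Finset.sum_range_zero d
          rw [h0, ← Finset.range_eq_Ico, ← hNdef, hb, mul_comm]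
      _ = k := aux_count_range b k r.val hb0 r.isLt
  refine ⟨Finset.image c Finset.univ, ?_, ?_⟩
  · intro y hy
    obtain ⟨r, _, rfl⟩ := Finset.mem_image.mp hy
    exact hnorm r
  · intro x hx
    have hx' : (Finset.univ.filter fun j => x j ≠ 0).card = 1 := hx
    obtain ⟨i, hi⟩ := Finset.card_eq_one.mp hx'
    have hxi : x i ≠ 0 := by
      have hmem : i ∈ Finset.univ.filter (fun j => x j ≠ 0) := by
        rw [hi]; exact Finset.mem_singleton_self i
      exact (Finset.mem_filter.mp hmem).2
    have hx0 : ∀ j, j ≠ i → x j = 0 := by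
      intro j hj
      by_contra h
      have hmem : j ∈ Finset.univ.filter (fun j => x j ≠ 0) :=
        Finset.mem_filter.mpr ⟨Finset.mem_univ _, h⟩
      rw [hi, Finset.mem_singleton] at hmem
      exact hj hmem
    have hdist : ∀ r : Fin b, hammingDist x (c r) = k - 1 ↔ c r i = x i := by
      intro r
      have hT : (Finset.univ.filter fun j => c r j ≠ 0).card = k := hnorm r
      have hdd : hammingDist x (c r) = (Finset.univ.filter fun j => x j ≠ c r j).card := rfl
      constructor
      · intro hdk
        by_contra hne'
        have hsub : (Finset.univ.filter fun j => c r j ≠ 0)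
            ⊆ (Finset.univ.filter fun j => x j ≠ c r j) := by
          intro j hj
          rw [Finset.mem_filter] at hj ⊢
          refine ⟨Finset.mem_univ _, ?_⟩
          by_cases hji : j = i
          · subst hji; exact fun h => hne' h.symm
          · rw [hx0 j hji]; exact fun h => hj.2 h.symm
        have hle := Finset.card_le_card hsub
        omega
      · intro he
        have hiT : i ∈ Finset.univ.filter (fun j => c r j ≠ 0) :=
          Finset.mem_filter.mpr ⟨Finset.mem_univ _, by rw [he]; exact hxi⟩
        have hset : (Finset.univ.filter fun j => x j ≠ c r j)
            = (Finset.univ.filter fun j => c r j ≠ 0).erase i := by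
          ext j
          rw [Finset.mem_erase, Finset.mem_filter, Finset.mem_filter]
          constructor
          · rintro ⟨-, hj⟩
            by_cases hji : j = i
            · subst hji; exact absurd he.symm hj
            · exact ⟨hji, Finset.mem_univ _, fun h0 => hj (by rw [hx0 j hji, h0])⟩
          · rintro ⟨hji, -, hj⟩
            exact ⟨Finset.mem_univ _, by rw [hx0 j hji]; exact fun h => hj h.symm⟩
        rw [hdd, hset, Finset.card_erase_of_mem hiT, hT]
    set r₀ : Fin b := ⟨(Off i.val + ((x i).val - 1)) % b, Nat.mod_lt _ hb0⟩ with hr₀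
    have hcr₀ : c r₀ i = x i := (hciff r₀ i (x i) hxi).mpr rfl
    refine ⟨c r₀, ⟨Finset.mem_image_of_mem c (Finset.mem_univ r₀), (hdist r₀).mpr hcr₀⟩, ?_⟩
    rintro y ⟨hyC, hyd⟩
    obtain ⟨r, -, rfl⟩ := Finset.mem_image.mp hyC
    have hcri : c r i = x i := (hdist r).mp hyd
    have hr : (r : ℕ) = (Off i.val + ((x i).val - 1)) % b := (hciff r i (x i) hxi).mp hcri
    exact congrArg c (Fin.ext hr)
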